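/- arXiv:1007.1955 — 2 statements merged into one kernel-verified Lean document; each statement's English description precedes it below -/
import Mathlib

section
/- For n ≥ 2, the polynomial Q_n(x) = Σ_{k=1}^{n} (-1)^{n-k} (k-1)! {n,k} x^k is divisible by x(x-1), i.e., Q_n(0) = 0 and Q_n(1) = 0. -/
/-- Stirling numbers of the second kind. -/
def stirlingSecond : ℕ → ℕ → ℕ
  | 0, 0 => 1
  | 0, _ + 1 => 0
  | _ + 1, 0 => 0
  | n + 1, k + 1 => (k + 1) * stirlingSecond n (k + 1) + stirlingSecond n k

lemma stirling_zero : ∀ n k, n < k → stirlingSecond n k = 0 := by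
  intro n
  induction n with
  | zero =>
    intro k hk
    match k, hk with
    | k + 1, _ => rfl
  | succ n ih =>
    intro k hk
    match k, hk with
    | k + 1, hk =>
      show (k + 1) * stirlingSecond n (k + 1) + stirlingSecond n k = 0
      rw [ih (k + 1) (by omega), ih k (by omega)]
      ring

lemma key (m : ℕ) (hm : 1 ≤ m) :
    ∑ k ∈ Finset.Icc 1 (m + 1),
      (-1 : ℝ) ^ (m + 1 - k) * (Nat.factorial (k - 1)) * stirlingSecond (m + 1) k = 0 := by
  have h1 : ∑ k ∈ Finset.Icc 1 (m + 1),
      (-1 : ℝ) ^ (m + 1 - k) * (Nat.factorial (k - 1)) * stirlingSecond (m + 1) k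
      = ∑ i ∈ Finset.range (m + 1),
        ((-1 : ℝ) ^ (m - i) * (Nat.factorial (i + 1)) * stirlingSecond m (i + 1)
          + (-1 : ℝ) ^ (m - i) * (Nat.factorial i) * stirlingSecond m i) := by
    rw [← Finset.Ico_add_one_right_eq_Icc, Finset.sum_Ico_eq_sum_range]
    apply Finset.sum_congr (by congr 1)
    intro i hi
    simp only [Finset.mem_range] at hi
    have hrec : stirlingSecond (m + 1) (1 + i)
        = (i + 1) * stirlingSecond m (i + 1) + stirlingSecond m i := by
      have h : 1 + i = i + 1 := by omega
      rw [h]; rfl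
    have he : m + 1 - (1 + i) = m - i := by omega
    have hf : 1 + i - 1 = i := by omega
    rw [hrec, he, hf]
    push_cast [Nat.factorial_succ]
    ring
  rw [h1, Finset.sum_add_distrib]
  have hT1 : ∑ i ∈ Finset.range (m + 1),
      (-1 : ℝ) ^ (m - i) * (Nat.factorial (i + 1)) * stirlingSecond m (i + 1)
      = ∑ i ∈ Finset.range m,
        (-1 : ℝ) ^ (m - i) * (Nat.factorial (i + 1)) * stirlingSecond m (i + 1) := by
    rw [Finset.sum_range_succ, stirling_zero m (m + 1) (by omega)]
    simp
  have hT2 : ∑ i ∈ Finset.range (m + 1),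
      (-1 : ℝ) ^ (m - i) * (Nat.factorial i) * stirlingSecond m i
      = ∑ i ∈ Finset.range m,
        (-1 : ℝ) ^ (m - (i + 1)) * (Nat.factorial (i + 1)) * stirlingSecond m (i + 1) := by
    rw [Finset.sum_range_succ']
    have hm0 : stirlingSecond m 0 = 0 := by
      obtain ⟨m', rfl⟩ : ∃ m', m = m' + 1 := ⟨m - 1, by omega⟩
      rfl
    rw [hm0]
    simp
  rw [hT1, hT2, ← Finset.sum_add_distrib]
  apply Finset.sum_eq_zero
  intro i hi
  simp only [Finset.mem_range] at hi
  have hs : m - i = (m - (i + 1)) + 1 := by omega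
  rw [hs, pow_succ]
  ring

theorem stmt_13 (n : ℕ) (hn : 2 ≤ n)
    (Q : ℝ → ℝ)
    (hQ : ∀ x : ℝ, Q x = ∑ k ∈ Finset.Icc 1 n,
      (-1 : ℝ) ^ (n - k) * (Nat.factorial (k - 1)) * stirlingSecond n k * x ^ k) :
    Q 0 = 0 ∧ Q 1 = 0 := by
  constructor
  · rw [hQ]
    apply Finset.sum_eq_zero
    intro k hk
    simp only [Finset.mem_Icc] at hk
    rw [zero_pow (by omega)]
    ring
  · rw [hQ]
    simp only [one_pow, mul_one]
    obtain ⟨m, rfl⟩ : ∃ m, n = m + 1 := ⟨n - 1, by omega⟩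
    exact key m (by omega)
end

section
/- Define b_{α,β} = Σ_{j=0}^{β} (-1)^j · C(α+β, j) · a_{α+β-j, β-j} / 2^{β-j}, where a_{n,k} are the coefficients of the Mittag-Leffler polynomials. Then for α ≥ 4 and β ≥ 1, b_{α,β} = (α+β-2)(α+β-1)·(b_{α-2,β} + b_{α-2,β-1}). -/
/-- Coefficients `a_{n,k}` of the Mittag-Leffler polynomials:
`a_{0,0} = 1`, `a_{1,1} = 2`, `a_{n,k} = 0` for `k > n`, and
`a_{n,k} = (n-1)(n-2) a_{n-2,k} + 2 a_{n-1,k-1}` for `n ≥ 2`. -/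
def mlCoeff : ℕ → ℕ → ℤ
  | 0, 0 => 1
  | 0, _ + 1 => 0
  | 1, 0 => 0
  | 1, 1 => 2
  | 1, _ + 2 => 0
  | n + 2, 0 => (n + 1) * n * mlCoeff n 0
  | n + 2, k + 1 => (n + 1) * n * mlCoeff n (k + 1) + 2 * mlCoeff (n + 1) k

/-- The coefficients `b_{α,β}` from the paper. -/
def bCoeff (α β : ℕ) : ℚ :=
  ∑ j ∈ Finset.range (β + 1),
    (-1 : ℚ) ^ j * (α + β).choose j * (mlCoeff (α + β - j) (β - j) : ℚ) / 2 ^ (β - j)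

/-- Normalized coefficients: `c n k = k! a_{n,k} / (n! 2^k)`. -/
def cCoeff (n k : ℕ) : ℚ :=
  (k.factorial : ℚ) * (mlCoeff n k : ℚ) / ((n.factorial : ℚ) * 2 ^ k)

lemma fac_ne (n : ℕ) : ((n.factorial : ℚ)) ≠ 0 :=
  Nat.cast_ne_zero.mpr (Nat.factorial_ne_zero n)

/-- Key recurrence for `c`, a reformulation of the defining recurrence of `a`. -/
lemma crec (m k : ℕ) :
    ((m : ℚ) + 2) * cCoeff (m + 2) k
      = (m : ℚ) * cCoeff m k + (k : ℚ) * cCoeff (m + 1) (k - 1) := by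
  have hfs2 : ((m + 2).factorial : ℚ) = ((m : ℚ) + 2) * ((m + 1).factorial : ℚ) := by
    rw [show m + 2 = (m + 1) + 1 by rfl, Nat.factorial_succ]; push_cast; ring
  have hfs1 : ((m + 1).factorial : ℚ) = ((m : ℚ) + 1) * (m.factorial : ℚ) := by
    rw [Nat.factorial_succ]; push_cast; ring
  cases k with
  | zero =>
      simp only [cCoeff, mlCoeff]
      rw [hfs2, hfs1]
      push_cast
      field_simp
      ring
  | succ k =>
      simp only [cCoeff, mlCoeff]
      rw [hfs2, hfs1, Nat.factorial_succ, Nat.add_sub_cancel, pow_succ]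
      push_cast
      field_simp

/-- The auxiliary sums `d α β = Σ_i (-1)^(β-i) C(β,i) c(α+i,i)`. -/
def dCoeff (α β : ℕ) : ℚ :=
  ∑ i ∈ Finset.range (β + 1), (-1 : ℚ) ^ (β - i) * (β.choose i : ℚ) * cCoeff (α + i) i

/-- `bCoeff` in terms of `dCoeff`. -/
lemma bd (α β : ℕ) :
    bCoeff α β = ((α + β).factorial : ℚ) / (β.factorial : ℚ) * dCoeff α β := by
  unfold bCoeff dCoeff
  rw [Finset.mul_sum,
    ← Finset.sum_range_reflect
      (fun i => ((α + β).factorial : ℚ) / (β.factorial : ℚ) *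
        ((-1 : ℚ) ^ (β - i) * (β.choose i : ℚ) * cCoeff (α + i) i)) (β + 1)]
  apply Finset.sum_congr rfl
  intro j hj
  have hj' : j ≤ β := Nat.lt_succ_iff.mp (Finset.mem_range.mp hj)
  have h1 : β + 1 - 1 - j = β - j := by omega
  rw [h1, Nat.sub_sub_self hj', Nat.choose_symm hj']
  have h2 : α + (β - j) = α + β - j := by omega
  rw [h2]
  unfold cCoeff
  have hc1 : ((α + β).choose j : ℚ)
      = ((α + β).factorial : ℚ) / ((j.factorial : ℚ) * ((α + β - j).factorial : ℚ)) :=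
    Nat.cast_choose ℚ (by omega)
  have hc2 : ((β).choose j : ℚ)
      = ((β).factorial : ℚ) / ((j.factorial : ℚ) * ((β - j).factorial : ℚ)) :=
    Nat.cast_choose ℚ hj'
  rw [hc1, hc2]
  have e1 := fac_ne (α + β - j)
  have e2 := fac_ne j
  have e3 := fac_ne β
  have e4 := fac_ne (β - j)
  have e5 : ((2 : ℚ)) ^ (β - j) ≠ 0 := by positivity
  field_simp

/-- Generic helper: absorbing the factor `(β - i)` into the binomial shortens the sum. -/
lemma sumP3 (b γ : ℕ) :
    ∑ i ∈ Finset.range (b + 2),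
        (-1 : ℚ) ^ (b + 1 - i) * ((b + 1).choose i : ℚ) * (((b : ℚ) + 1 - i) * cCoeff (γ + i) i)
      = -((b : ℚ) + 1) *
        ∑ i ∈ Finset.range (b + 1), (-1 : ℚ) ^ (b - i) * (b.choose i : ℚ) * cCoeff (γ + i) i := by
  rw [Finset.sum_range_succ]
  have hlast : ((b : ℚ) + 1 - ((b + 1 : ℕ) : ℚ)) = 0 := by push_cast; ring
  rw [Finset.mul_sum]
  have : ((b : ℚ) + 1 - ((b + 1 : ℕ) : ℚ)) * cCoeff (γ + (b + 1)) (b + 1) = 0 := by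
    rw [hlast]; ring
  push_cast at this ⊢
  rw [show ((b : ℚ) + 1 - ((b : ℚ) + 1)) * cCoeff (γ + (b + 1)) (b + 1) = 0 by ring]
  rw [mul_zero, add_zero]
  apply Finset.sum_congr rfl
  intro i hi
  have hib : i ≤ b := Nat.lt_succ_iff.mp (Finset.mem_range.mp hi)
  have hs : b + 1 - i = (b - i) + 1 := by omega
  have hch : (((b + 1).choose i : ℕ) : ℚ) * ((b : ℚ) + 1 - i) = ((b : ℚ) + 1) * (b.choose i : ℚ) := by
    have h := congrArg (fun x : ℕ => (x : ℚ)) (Nat.choose_mul_succ_eq b i)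
    simp only [Nat.cast_mul] at h
    rw [Nat.cast_sub (by omega : i ≤ b + 1)] at h
    push_cast at h ⊢
    linarith [h]
  rw [hs, pow_succ]
  linear_combination (-(-1 : ℚ) ^ (b - i) * cCoeff (γ + i) i) * hch

/-- Generic helper: reindexing the `i·c(α+1+i,i-1)` sum. -/
lemma sumP2 (b α : ℕ) :
    ∑ i ∈ Finset.range (b + 2),
        (-1 : ℚ) ^ (b + 1 - i) * ((b + 1).choose i : ℚ) * ((i : ℚ) * cCoeff (α + 1 + i) (i - 1))
      = ((b : ℚ) + 1) *
        ∑ i ∈ Finset.range (b + 1),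
          (-1 : ℚ) ^ (b - i) * (b.choose i : ℚ) * cCoeff (α + 2 + i) i := by
  rw [Finset.sum_range_succ']
  simp only [Nat.cast_zero, zero_mul, mul_zero, add_zero]
  rw [Finset.mul_sum]
  apply Finset.sum_congr rfl
  intro i hi
  have hib : i ≤ b := Nat.lt_succ_iff.mp (Finset.mem_range.mp hi)
  have h1 : b + 1 - (i + 1) = b - i := by omega
  have h2 : α + 1 + (i + 1) = α + 2 + i := by omega
  have h3 : (i + 1) - 1 = i := by omega
  rw [h1, h2, h3]
  have hch : (((b + 1).choose (i + 1) : ℕ) : ℚ) * ((i : ℚ) + 1)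
      = ((b : ℚ) + 1) * (b.choose i : ℚ) := by
    have h := congrArg (fun x : ℕ => (x : ℚ)) (Nat.add_one_mul_choose_eq b i)
    push_cast at h
    linarith [h]
  push_cast
  linear_combination ((-1 : ℚ) ^ (b - i) * cCoeff (α + 2 + i) i) * hch

/-- The key recurrence for `d`. -/
lemma drec (α b : ℕ) :
    ((α : ℚ) + 2 + ((b : ℚ) + 1)) * dCoeff (α + 2) (b + 1)
      = ((α : ℚ) + ((b : ℚ) + 1)) * dCoeff α (b + 1) + ((b : ℚ) + 1) * dCoeff α b := by
  unfold dCoeff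
  have key : ∀ i ∈ Finset.range (b + 1 + 1),
      ((α : ℚ) + 2 + ((b : ℚ) + 1)) *
          ((-1 : ℚ) ^ (b + 1 - i) * ((b + 1).choose i : ℚ) * cCoeff (α + 2 + i) i)
        = (-1 : ℚ) ^ (b + 1 - i) * ((b + 1).choose i : ℚ) * (((α : ℚ) + i) * cCoeff (α + i) i)
          + ((-1 : ℚ) ^ (b + 1 - i) * ((b + 1).choose i : ℚ) * ((i : ℚ) * cCoeff (α + 1 + i) (i - 1))
          + (-1 : ℚ) ^ (b + 1 - i) * ((b + 1).choose i : ℚ) *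
              (((b : ℚ) + 1 - i) * cCoeff (α + 2 + i) i)) := by
    intro i _
    have h1 : α + 2 + i = (α + i) + 2 := by omega
    have h2 : α + 1 + i = (α + i) + 1 := by omega
    rw [h1, h2]
    have hc := crec (α + i) i
    push_cast at hc ⊢
    linear_combination ((-1 : ℚ) ^ (b + 1 - i) * (((b + 1).choose i : ℕ) : ℚ)) * hc
  have h1 : ((α : ℚ) + 2 + ((b : ℚ) + 1)) *
      ∑ i ∈ Finset.range (b + 1 + 1),
        (-1 : ℚ) ^ (b + 1 - i) * ((b + 1).choose i : ℚ) * cCoeff (α + 2 + i) i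
      = (∑ i ∈ Finset.range (b + 1 + 1),
          (-1 : ℚ) ^ (b + 1 - i) * ((b + 1).choose i : ℚ) * (((α : ℚ) + i) * cCoeff (α + i) i))
        + ((∑ i ∈ Finset.range (b + 1 + 1),
            (-1 : ℚ) ^ (b + 1 - i) * ((b + 1).choose i : ℚ) * ((i : ℚ) * cCoeff (α + 1 + i) (i - 1)))
          + ∑ i ∈ Finset.range (b + 1 + 1),
              (-1 : ℚ) ^ (b + 1 - i) * ((b + 1).choose i : ℚ) *
                (((b : ℚ) + 1 - i) * cCoeff (α + 2 + i) i)) := by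
    rw [Finset.mul_sum, ← Finset.sum_add_distrib, ← Finset.sum_add_distrib]
    exact Finset.sum_congr rfl key
  have hA : (∑ i ∈ Finset.range (b + 1 + 1),
        (-1 : ℚ) ^ (b + 1 - i) * ((b + 1).choose i : ℚ) * (((α : ℚ) + i) * cCoeff (α + i) i))
      = ((α : ℚ) + ((b : ℚ) + 1)) *
          (∑ i ∈ Finset.range (b + 1 + 1),
            (-1 : ℚ) ^ (b + 1 - i) * ((b + 1).choose i : ℚ) * cCoeff (α + i) i)
        - ∑ i ∈ Finset.range (b + 1 + 1),
            (-1 : ℚ) ^ (b + 1 - i) * ((b + 1).choose i : ℚ) *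
              (((b : ℚ) + 1 - i) * cCoeff (α + i) i) := by
    rw [Finset.mul_sum, ← Finset.sum_sub_distrib]
    exact Finset.sum_congr rfl fun i _ => by ring
  rw [h1, hA, sumP2 b α, sumP3 b (α + 2), sumP3 b α]
  ring

theorem stmt_18 (α β : ℕ) (hα : 4 ≤ α) (hβ : 1 ≤ β) :
    bCoeff α β = ((α : ℚ) + β - 2) * ((α : ℚ) + β - 1) *
      (bCoeff (α - 2) β + bCoeff (α - 2) (β - 1)) := by
  obtain ⟨a, rfl⟩ : ∃ a, α = a + 4 := ⟨α - 4, by omega⟩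
  obtain ⟨b, rfl⟩ : ∃ b, β = b + 1 := ⟨β - 1, by omega⟩
  have e1 : a + 4 - 2 = a + 2 := by omega
  have e2 : b + 1 - 1 = b := by omega
  rw [e1, e2, bd, bd, bd]
  have h4 : a + 4 + (b + 1) = (a + b + 4) + 1 := by omega
  have h2 : a + 2 + (b + 1) = (a + b + 2) + 1 := by omega
  have h2' : a + 2 + b = a + b + 2 := by omega
  rw [h4, h2, h2']
  have hd := drec (a + 2) b
  have hA : a + 2 + 2 = a + 4 := by omega
  rw [hA] at hd
  have hf5 : (((a + b + 4) + 1).factorial : ℚ)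
      = ((a : ℚ) + b + 5) * ((a : ℚ) + b + 4) * ((a : ℚ) + b + 3) * ((a + b + 2).factorial : ℚ) := by
    rw [Nat.factorial_succ, show a + b + 4 = (a + b + 3) + 1 by omega, Nat.factorial_succ,
      show a + b + 3 = (a + b + 2) + 1 by omega, Nat.factorial_succ]
    push_cast; ring
  have hf3 : (((a + b + 2) + 1).factorial : ℚ) = ((a : ℚ) + b + 3) * ((a + b + 2).factorial : ℚ) := by
    rw [Nat.factorial_succ]; push_cast; ring
  have hfb : ((b + 1).factorial : ℚ) = ((b : ℚ) + 1) * (b.factorial : ℚ) := by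
    rw [Nat.factorial_succ]; push_cast; ring
  rw [hf5, hf3, hfb]
  have eb := fac_ne b
  have ef := fac_ne (a + b + 2)
  have hb1 : ((b : ℚ) + 1) ≠ 0 := by positivity
  have habd : ((a : ℚ) + b + 5) ≠ 0 := by positivity
  push_cast
  field_simp
  push_cast at hd
  linear_combination (((a : ℚ) + b + 4) * ((a : ℚ) + b + 3)) * hd
end
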